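/- arXiv:1107.5346 — 8 statements merged into one kernel-verified Lean document; each statement's English description precedes it below -/
import Mathlib

section
/- Let A₀ > 0 and 0 < δ < 1/4 be real numbers. Let H : ℝ → ℝ be differentiable on [0,δ) with H(0) = 0, and let φ, ξ : ℝ → ℝ be continuous on [0,δ) with φ(t) > A₀/4 and 0 < ξ(t) < 4·A₀ for all t ∈ [0,δ). If H'(t)·φ(t) ≤ −∫₀ᵗ H(s)·ξ(s) ds for all t ∈ [0,δ), then H(t) ≤ 0 for all t ∈ [0,δ). -/
/-- Case 1 (R₀ > 0) of Claim 1: the integro-differential inequality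
`H'(t)·φ(t) ≤ −∫₀ᵗ H(s)·ξ(s) ds` forces `H ≤ 0` on `[0, δ)`. -/
theorem stmt_0 (A₀ δ : ℝ) (hA₀ : 0 < A₀) (hδ0 : 0 < δ) (hδ : δ < 1/4)
    (H H' φ ξ : ℝ → ℝ)
    (hHdiff : ∀ t ∈ Set.Ico (0:ℝ) δ, HasDerivWithinAt H (H' t) (Set.Ico 0 δ) t)
    (hH0 : H 0 = 0)
    (hφcont : ContinuousOn φ (Set.Ico 0 δ))
    (hξcont : ContinuousOn ξ (Set.Ico 0 δ))
    (hφ : ∀ t ∈ Set.Ico (0:ℝ) δ, A₀ / 4 < φ t)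
    (hξpos : ∀ t ∈ Set.Ico (0:ℝ) δ, 0 < ξ t)
    (hξlt : ∀ t ∈ Set.Ico (0:ℝ) δ, ξ t < 4 * A₀)
    (hineq : ∀ t ∈ Set.Ico (0:ℝ) δ,
      H' t * φ t ≤ - ∫ s in (0:ℝ)..t, H s * ξ s) :
    ∀ t ∈ Set.Ico (0:ℝ) δ, H t ≤ 0 := by
  intro p hp
  by_contra hHp
  push_neg at hHp
  obtain ⟨hp0, hpδ⟩ := hp
  have hsub : Set.Icc (0:ℝ) p ⊆ Set.Ico 0 δ := fun x hx => ⟨hx.1, lt_of_le_of_lt hx.2 hpδ⟩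
  have hHcont : ContinuousOn H (Set.Ico 0 δ) := fun x hx => (hHdiff x hx).continuousWithinAt
  obtain ⟨q, hq, hqmin⟩ := (isCompact_Icc : IsCompact (Set.Icc (0:ℝ) p)).exists_isMinOn
    (Set.nonempty_Icc.2 hp0) (hHcont.mono hsub)
  have hqmin' : ∀ x ∈ Set.Icc (0:ℝ) p, H q ≤ H x := fun x hx => hqmin hx
  set N : ℝ := -(H q) with hNdef
  have hN0 : 0 ≤ N := by
    have := hqmin' 0 ⟨le_refl 0, hp0⟩
    simp only [hNdef, hH0] at *
    linarith
  -- key derivative bound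
  have hkey : ∀ s ∈ Set.Icc (0:ℝ) p, H' s ≤ 4 * N := by
    intro s hs
    have hsδ : s ∈ Set.Ico (0:ℝ) δ := hsub hs
    have hs0 : (0:ℝ) ≤ s := hs.1
    have hHξcont : ContinuousOn (fun r => H r * ξ r) (Set.uIcc (0:ℝ) s) := by
      rw [Set.uIcc_of_le hs0]
      exact ((hHcont.mono (fun x hx => hsub ⟨hx.1, le_trans hx.2 hs.2⟩)).mul
        (hξcont.mono (fun x hx => hsub ⟨hx.1, le_trans hx.2 hs.2⟩)))
    have h1 : IntervalIntegrable (fun r => H r * ξ r) MeasureTheory.volume 0 s :=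
      hHξcont.intervalIntegrable
    have h2 : ∀ r ∈ Set.Icc (0:ℝ) s, -(4*A₀*N) ≤ H r * ξ r := by
      intro r hr
      have hr' : r ∈ Set.Icc (0:ℝ) p := ⟨hr.1, le_trans hr.2 hs.2⟩
      have hHr : -N ≤ H r := by
        have := hqmin' r hr'
        simp only [hNdef]; linarith
      have hξr := hξpos r (hsub hr')
      have hξr2 := hξlt r (hsub hr')
      nlinarith [mul_nonneg (by linarith : (0:ℝ) ≤ H r + N) hξr.le,
        mul_nonneg hN0 (by linarith : (0:ℝ) ≤ 4*A₀ - ξ r)]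
    have h3 : - (∫ r in (0:ℝ)..s, H r * ξ r) ≤ 4*A₀*N*s := by
      have hmono := intervalIntegral.integral_mono_on hs0
        (intervalIntegrable_const (c := -(4*A₀*N))) h1 h2
      rw [intervalIntegral.integral_const] at hmono
      simp only [smul_eq_mul] at hmono
      linarith
    have h4 := le_trans (hineq s hsδ) h3
    have hφs := hφ s hsδ
    -- from H' s * φ s ≤ 4A₀ N s, φ s > A₀/4 > 0, s < δ < 1/4 deduce H' s ≤ 4N
    by_contra hcon
    push_neg at hcon
    have hH's : 0 < H' s := lt_of_le_of_lt (by nlinarith) hcon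
    have : H' s * (A₀/4) ≤ H' s * φ s := by nlinarith
    have hsδ' : s < 1/4 := lt_trans hsδ.2 hδ
    have h16 : 16*N*s ≤ 4*N := by
      nlinarith [mul_nonneg hN0 (by linarith : (0:ℝ) ≤ 1/4 - s)]
    nlinarith [mul_pos hA₀ (show (0:ℝ) < H' s - 16*N*s by linarith)]
  -- monotonicity of g t = 4Nt - H t on [q, p]
  have hqp : q ≤ p := hq.2
  have hIccsub : Set.Icc q p ⊆ Set.Icc (0:ℝ) p := fun x hx => ⟨le_trans hq.1 hx.1, hx.2⟩
  have hgmono : MonotoneOn (fun t => 4*N*t - H t) (Set.Icc q p) := by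
    apply monotoneOn_of_deriv_nonneg (convex_Icc q p)
    · exact ((continuous_const.mul continuous_id).continuousOn).sub
        (hHcont.mono (fun x hx => hsub (hIccsub hx)))
    · rw [interior_Icc]
      intro x hx
      have hx' : x ∈ Set.Icc (0:ℝ) p := hIccsub ⟨hx.1.le, hx.2.le⟩
      have hxmem : x ∈ Set.Ioo (0:ℝ) δ := ⟨lt_of_le_of_lt hq.1 hx.1,
        lt_of_lt_of_le hx.2 (le_of_lt hpδ)⟩
      have hHx : HasDerivAt H (H' x) x :=
        (hHdiff x (hsub hx')).hasDerivAt (mem_nhds_iff.2 ⟨Set.Ioo 0 δ,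
          Set.Ioo_subset_Ico_self, isOpen_Ioo, hxmem⟩)
      exact (((hasDerivAt_id x).const_mul (4*N)).sub hHx).differentiableAt.differentiableWithinAt
    · rw [interior_Icc]
      intro x hx
      have hx' : x ∈ Set.Icc (0:ℝ) p := hIccsub ⟨hx.1.le, hx.2.le⟩
      have hxmem : x ∈ Set.Ioo (0:ℝ) δ := ⟨lt_of_le_of_lt hq.1 hx.1,
        lt_of_lt_of_le hx.2 (le_of_lt hpδ)⟩
      have hHx : HasDerivAt H (H' x) x :=
        (hHdiff x (hsub hx')).hasDerivAt (mem_nhds_iff.2 ⟨Set.Ioo 0 δ,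
          Set.Ioo_subset_Ico_self, isOpen_Ioo, hxmem⟩)
      have hgx : HasDerivAt (fun t => 4*N*t - H t) (4*N*1 - H' x) x :=
        ((hasDerivAt_id x).const_mul (4*N)).sub hHx
      rw [hgx.deriv]
      have := hkey x hx'
      linarith
  have hgqp := hgmono (Set.left_mem_Icc.2 hqp) (Set.right_mem_Icc.2 hqp) hqp
  simp only at hgqp
  -- H p ≤ H q + 4N(p - q) = -N + 4N(p-q) ≤ 0
  have hpq4 : p - q ≤ 1/4 := by
    have : p < 1/4 := lt_trans hpδ hδ
    have := hq.1
    linarith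
  have hHq : H q = -N := by simp [hNdef]
  nlinarith [mul_nonneg hN0 (by linarith : (0:ℝ) ≤ 1/4 - (p - q))]
end

section
/- Let A₀ > 0 and 0 < δ < 1/4 be real numbers. Let H : ℝ → ℝ be differentiable on [0,δ) with H(0) = 0, and let φ, ξ : ℝ → ℝ be continuous on [0,δ) with φ(t) > A₀/4 and 0 < ξ(t) < 4·A₀ for all t ∈ [0,δ). If H'(t)·φ(t) ≤ ∫₀ᵗ H(s)·ξ(s) ds for all t ∈ [0,δ), then H(t) ≤ 0 for all t ∈ [0,δ). -/
/-- Case 3 (R₀ < 0) of Claim 1: the integro-differential inequality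
`H'(t)·φ(t) ≤ ∫₀ᵗ H(s)·ξ(s) ds` forces `H ≤ 0` on `[0, δ)`. -/
theorem stmt_1 (A₀ δ : ℝ) (hA₀ : 0 < A₀) (hδ0 : 0 < δ) (hδ : δ < 1/4)
    (H H' φ ξ : ℝ → ℝ)
    (hHdiff : ∀ t ∈ Set.Ico (0:ℝ) δ, HasDerivWithinAt H (H' t) (Set.Ico 0 δ) t)
    (hH0 : H 0 = 0)
    (hφcont : ContinuousOn φ (Set.Ico 0 δ))
    (hξcont : ContinuousOn ξ (Set.Ico 0 δ))
    (hφ : ∀ t ∈ Set.Ico (0:ℝ) δ, A₀ / 4 < φ t)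
    (hξpos : ∀ t ∈ Set.Ico (0:ℝ) δ, 0 < ξ t)
    (hξlt : ∀ t ∈ Set.Ico (0:ℝ) δ, ξ t < 4 * A₀)
    (hineq : ∀ t ∈ Set.Ico (0:ℝ) δ,
      H' t * φ t ≤ ∫ s in (0:ℝ)..t, H s * ξ s) :
    ∀ t ∈ Set.Ico (0:ℝ) δ, H t ≤ 0 := by
  intro t₁ ht₁
  by_contra hpos
  push_neg at hpos
  have hcontH : ContinuousOn H (Set.Ico 0 δ) :=
    fun x hx => (hHdiff x hx).continuousWithinAt
  have hsub : Set.Icc (0:ℝ) t₁ ⊆ Set.Ico 0 δ :=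
    fun x hx => ⟨hx.1, lt_of_le_of_lt hx.2 ht₁.2⟩
  obtain ⟨ts, hts, hmax⟩ := (isCompact_Icc : IsCompact (Set.Icc (0:ℝ) t₁)).exists_isMaxOn
    (Set.nonempty_Icc.2 ht₁.1) (hcontH.mono hsub)
  set M := H ts with hMdef
  have ht₁mem : t₁ ∈ Set.Icc (0:ℝ) t₁ := Set.right_mem_Icc.2 ht₁.1
  have hMpos : 0 < M := lt_of_lt_of_le hpos (hmax ht₁mem)
  have htspos : 0 < ts := by
    rcases lt_or_eq_of_le hts.1 with h | h
    · exact h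
    · exfalso; rw [hMdef, ← h, hH0] at hMpos; exact lt_irrefl 0 hMpos
  have htsδ : ts < δ := lt_of_le_of_lt hts.2 ht₁.2
  -- key derivative bound on (0, ts)
  have hkey : ∀ x ∈ Set.Ioo (0:ℝ) ts, H' x ≤ 16 * M * x := by
    intro x hx
    have hxIco : x ∈ Set.Ico (0:ℝ) δ := ⟨hx.1.le, lt_trans hx.2 htsδ⟩
    have hxsub : Set.Icc (0:ℝ) x ⊆ Set.Icc 0 t₁ :=
      Set.Icc_subset_Icc le_rfl (hx.2.le.trans hts.2)
    have hintble : IntervalIntegrable (fun s => H s * ξ s) MeasureTheory.volume 0 x := by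
      apply ContinuousOn.intervalIntegrable
      rw [Set.uIcc_of_le hx.1.le]
      exact ((hcontH.mono (hsub.trans' hxsub)).mul (hξcont.mono (hsub.trans' hxsub)))
    have hconst : IntervalIntegrable (fun _ : ℝ => 4 * A₀ * M) MeasureTheory.volume 0 x :=
      intervalIntegrable_const
    have hbound : (∫ s in (0:ℝ)..x, H s * ξ s) ≤ 4 * A₀ * M * x := by
      have := intervalIntegral.integral_mono_on hx.1.le hintble hconst (fun s hs => ?_)
      · have heq : (∫ _ in (0:ℝ)..x, 4 * A₀ * M) = 4 * A₀ * M * x := by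
          simp [intervalIntegral.integral_const]; ring
        linarith [this, heq.le, heq.ge]
      · have hsIco : s ∈ Set.Ico (0:ℝ) δ := hsub (hxsub hs)
        have hξb : 0 < ξ s := hξpos s hsIco
        have hξb2 : ξ s < 4 * A₀ := hξlt s hsIco
        have hHs : H s ≤ M := hmax (hxsub hs)
        rcases le_or_gt (H s) 0 with h | h
        · nlinarith
        · nlinarith
    have h1 : H' x * φ x ≤ 4 * A₀ * M * x := le_trans (hineq x hxIco) hbound
    have h2 : A₀ / 4 < φ x := hφ x hxIco
    rcases le_or_gt (H' x) 0 with h | h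
    · nlinarith [hx.1, hMpos]
    · nlinarith [mul_lt_mul_of_pos_left h2 h]
  -- the comparison function g
  set g : ℝ → ℝ := fun t => H t - 8 * M * t ^ 2 with hgdef
  have hsub2 : Set.Icc (0:ℝ) ts ⊆ Set.Ico 0 δ :=
    fun x hx => ⟨hx.1, lt_of_le_of_lt hx.2 htsδ⟩
  have hgderiv : ∀ x ∈ Set.Ioo (0:ℝ) ts, HasDerivAt g (H' x - 16 * M * x) x := by
    intro x hx
    have hxδ : x < δ := lt_trans hx.2 htsδ
    have hnb : Set.Ico (0:ℝ) δ ∈ nhds x :=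
      Filter.mem_of_superset (Ioo_mem_nhds hx.1 hxδ) Set.Ioo_subset_Ico_self
    have hH : HasDerivAt H (H' x) x :=
      (hHdiff x ⟨hx.1.le, hxδ⟩).hasDerivAt hnb
    have hp : HasDerivAt (fun t : ℝ => 8 * M * t ^ 2) (16 * M * x) x := by
      have := (hasDerivAt_pow 2 x).const_mul (8 * M)
      exact this.congr_deriv (by norm_num; ring)
    exact hH.sub hp
  have hanti : AntitoneOn g (Set.Icc 0 ts) := by
    apply antitoneOn_of_deriv_nonpos (convex_Icc 0 ts)
    · exact (hcontH.mono hsub2).sub (Continuous.continuousOn (by continuity))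
    · intro x hx
      rw [interior_Icc] at hx
      exact (hgderiv x hx).differentiableAt.differentiableWithinAt
    · intro x hx
      rw [interior_Icc] at hx
      rw [(hgderiv x hx).deriv]
      have := hkey x hx
      linarith
  have hg0 : g 0 = 0 := by simp [hgdef, hH0]
  have hgts : g ts ≤ 0 := by
    have := hanti (Set.left_mem_Icc.2 htspos.le) (Set.right_mem_Icc.2 htspos.le) htspos.le
    rw [hg0] at this
    exact this
  have hMle : M ≤ 8 * M * ts ^ 2 := by
    have : H ts - 8 * M * ts ^ 2 ≤ 0 := hgts
    linarith [this]
  have htsδ' : ts < 1/4 := lt_trans htsδ hδ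
  have h16 : ts ^ 2 < 1 / 16 := by nlinarith
  nlinarith [mul_lt_mul_of_pos_left h16 hMpos]
end

section
/- Let A₀ > 0 and 0 < δ < 1/4 be real numbers. Let H : ℝ → ℝ be differentiable on [0,δ) with H(0) = 0, and let φ, ξ : ℝ → ℝ be continuous on [0,δ) with φ(t) > A₀/4 and 0 < ξ(t) < 4·A₀ for all t ∈ [0,δ). Suppose H'(t)·φ(t) ≤ ∫₀ᵗ H(s)·ξ(s) ds for all t ∈ [0,δ). If t₀ ∈ (0,δ) satisfies H(t₀) > 0, then the set I := { t ∈ [0,t₀] : H(t) ≥ H(t₀) } has infimum equal to 0. -/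
/-- Claim 2 in Case 3 of Theorem 2: under the integro-differential inequality
`H'(t)·φ(t) ≤ ∫₀ᵗ H(s)·ξ(s) ds`, if `t₀ ∈ (0,δ)` and `H(t₀) > 0`, then the set
`I = { t ∈ [0,t₀] : H(t) ≥ H(t₀) }` has infimum `0`. -/
theorem stmt_2 (A₀ δ : ℝ) (hA₀ : 0 < A₀) (hδ0 : 0 < δ) (hδ : δ < 1/4)
    (H H' φ ξ : ℝ → ℝ)
    (hHdiff : ∀ t ∈ Set.Ico (0:ℝ) δ, HasDerivWithinAt H (H' t) (Set.Ico 0 δ) t)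
    (hH0 : H 0 = 0)
    (hφcont : ContinuousOn φ (Set.Ico 0 δ))
    (hξcont : ContinuousOn ξ (Set.Ico 0 δ))
    (hφ : ∀ t ∈ Set.Ico (0:ℝ) δ, A₀ / 4 < φ t)
    (hξpos : ∀ t ∈ Set.Ico (0:ℝ) δ, 0 < ξ t)
    (hξlt : ∀ t ∈ Set.Ico (0:ℝ) δ, ξ t < 4 * A₀)
    (hineq : ∀ t ∈ Set.Ico (0:ℝ) δ,
      H' t * φ t ≤ ∫ s in (0:ℝ)..t, H s * ξ s)
    (t₀ : ℝ) (ht₀ : t₀ ∈ Set.Ioo (0:ℝ) δ) (hHt₀ : 0 < H t₀) :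
    sInf {t : ℝ | t ∈ Set.Icc (0:ℝ) t₀ ∧ H t₀ ≤ H t} = 0 := by
  obtain ⟨ht₀0, ht₀δ⟩ := ht₀
  set I : Set ℝ := {t : ℝ | t ∈ Set.Icc (0:ℝ) t₀ ∧ H t₀ ≤ H t} with hIdef
  have hsub : Set.Icc (0:ℝ) t₀ ⊆ Set.Ico 0 δ :=
    fun s hs => ⟨hs.1, lt_of_le_of_lt hs.2 ht₀δ⟩
  have hHcont : ContinuousOn H (Set.Ico 0 δ) :=
    fun t ht => (hHdiff t ht).continuousWithinAt
  have hInen : I.Nonempty := ⟨t₀, ⟨le_of_lt ht₀0, le_refl t₀⟩, le_refl _⟩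
  have hIbdd : BddBelow I := ⟨0, fun s hs => hs.1.1⟩
  have hIclosed : IsClosed I := by
    have heq : I = Set.Icc (0:ℝ) t₀ ∩ H ⁻¹' Set.Ici (H t₀) := rfl
    rw [heq]
    exact (hHcont.mono hsub).preimage_isClosed_of_isClosed isClosed_Icc isClosed_Ici
  set m := sInf I with hmdef
  have hmI : m ∈ I := hIclosed.csInf_mem hInen hIbdd
  have hm0 : 0 ≤ m := hmI.1.1
  have hmt₀ : m ≤ t₀ := hmI.1.2
  by_contra hne
  have hmpos : 0 < m := lt_of_le_of_ne hm0 (Ne.symm hne)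
  have hmδ : m < δ := lt_of_le_of_lt hmt₀ ht₀δ
  have hHm : 0 < H m := lt_of_lt_of_le hHt₀ hmI.2
  -- key: H s ≤ H m for s ∈ [0, m]
  have hkey : ∀ s ∈ Set.Icc (0:ℝ) m, H s ≤ H m := by
    intro s hs
    rcases eq_or_lt_of_le hs.2 with h | h
    · rw [h]
    · by_contra hc
      push_neg at hc
      have hsI : s ∈ I := ⟨⟨hs.1, hs.2.trans hmt₀⟩, le_trans hmI.2 hc.le⟩
      exact absurd (csInf_le hIbdd hsI) (not_le.2 h)
  -- derivative bound on [0, m]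
  have hderiv : ∀ t ∈ Set.Icc (0:ℝ) m, H' t ≤ 16 * H m * t := by
    intro t ht
    have htδ : t ∈ Set.Ico (0:ℝ) δ := ⟨ht.1, lt_of_le_of_lt ht.2 hmδ⟩
    have hsub2 : Set.Icc (0:ℝ) t ⊆ Set.Ico 0 δ :=
      fun s hs => ⟨hs.1, lt_of_le_of_lt hs.2 htδ.2⟩
    have hint : ∫ s in (0:ℝ)..t, H s * ξ s ≤ 4 * A₀ * H m * t := by
      have hintg : IntervalIntegrable (fun s => H s * ξ s) MeasureTheory.volume 0 t :=
        ((hHcont.mono hsub2).mul (hξcont.mono hsub2)).intervalIntegrable_of_Icc ht.1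
      have hpt : ∀ s ∈ Set.Icc (0:ℝ) t, H s * ξ s ≤ 4 * A₀ * H m := by
        intro s hs
        have h1 := hkey s ⟨hs.1, hs.2.trans ht.2⟩
        have h2 := hξpos s (hsub2 hs)
        have h3 := hξlt s (hsub2 hs)
        nlinarith [mul_nonneg (sub_nonneg.2 h1) h2.le,
          mul_nonneg hHm.le (sub_nonneg.2 h3.le)]
      calc ∫ s in (0:ℝ)..t, H s * ξ s
          ≤ ∫ _ in (0:ℝ)..t, (4 * A₀ * H m) :=
            intervalIntegral.integral_mono_on ht.1 hintg intervalIntegrable_const hpt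
        _ = 4 * A₀ * H m * t := by
            rw [intervalIntegral.integral_const, smul_eq_mul]
            ring
    have h1 := (hineq t htδ).trans hint
    have h2 := hφ t htδ
    rcases le_or_gt (H' t) 0 with h | h
    · nlinarith [mul_nonneg hHm.le ht.1]
    · nlinarith [mul_lt_mul_of_pos_left h2 h]
  -- the comparison function g
  have hgd : ∀ x ∈ Set.Ioo (0:ℝ) m,
      HasDerivAt (fun t => 16 * H m * m * t - H t) (16 * H m * m - H' x) x := by
    intro x hx
    have hxδ : x ∈ Set.Ico (0:ℝ) δ := ⟨hx.1.le, hx.2.trans hmδ⟩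
    have hmem : Set.Ico (0:ℝ) δ ∈ nhds x :=
      mem_nhds_iff.2 ⟨Set.Ioo 0 δ, Set.Ioo_subset_Ico_self, isOpen_Ioo, ⟨hx.1, hxδ.2⟩⟩
    have hH := (hHdiff x hxδ).hasDerivAt hmem
    have := ((hasDerivAt_id x).const_mul (16 * H m * m)).sub hH
    exact this.congr_deriv (by ring)
  have hmono : MonotoneOn (fun t => 16 * H m * m * t - H t) (Set.Icc 0 m) := by
    apply monotoneOn_of_deriv_nonneg (convex_Icc 0 m)
    · exact (continuousOn_const.mul continuousOn_id).sub
        (hHcont.mono (fun s hs => ⟨hs.1, lt_of_le_of_lt hs.2 hmδ⟩))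
    · intro x hx
      rw [interior_Icc] at hx
      exact ((hgd x hx).differentiableAt).differentiableWithinAt
    · intro x hx
      rw [interior_Icc] at hx
      rw [(hgd x hx).deriv]
      have h1 := hderiv x ⟨hx.1.le, hx.2.le⟩
      nlinarith [mul_nonneg hHm.le (sub_nonneg.2 hx.2.le)]
  have h0m := hmono (Set.left_mem_Icc.2 hm0) (Set.right_mem_Icc.2 hm0) hm0
  simp only [mul_zero, hH0, sub_zero, zero_sub] at h0m
  have hm4 : m < 1/4 := hmδ.trans hδ
  nlinarith [mul_pos hHm hmpos, mul_pos (mul_pos hHm hmpos) hmpos]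
end

section
/- Let A₀ > 0 and 0 < δ < 1/4 be real numbers. Let H : ℝ → ℝ be differentiable on [0,δ), and let φ, ξ : ℝ → ℝ be continuous on [0,δ) with φ(t) > A₀/4 and 0 < ξ(t) < 4·A₀ for all t ∈ [0,δ). Suppose H'(t)·φ(t) ≤ −∫₀ᵗ H(s)·ξ(s) ds for all t ∈ [0,δ). If 0 ≤ t₋ < t₊ < δ, H(t₋) < 0, and H(t₋) ≤ H(t) for all t ∈ [0,t₊], then H(t₊) ≤ H(t₋)·(1 − 16·δ²). -/
/-- The mean-value-theorem estimate in Case 1 of Claim 1 of Theorem 2: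
if `H(tm) < 0` is the minimum of `H` on `[0,tp]`, then
`H(tp) ≤ H(tm)·(1 − 16·δ²)`. -/
theorem stmt_3 (A₀ δ : ℝ) (hA₀ : 0 < A₀) (hδ0 : 0 < δ) (hδ : δ < 1/4)
    (H H' φ ξ : ℝ → ℝ)
    (hHdiff : ∀ t ∈ Set.Ico (0:ℝ) δ, HasDerivWithinAt H (H' t) (Set.Ico 0 δ) t)
    (hφcont : ContinuousOn φ (Set.Ico 0 δ))
    (hξcont : ContinuousOn ξ (Set.Ico 0 δ))
    (hφ : ∀ t ∈ Set.Ico (0:ℝ) δ, A₀ / 4 < φ t)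
    (hξpos : ∀ t ∈ Set.Ico (0:ℝ) δ, 0 < ξ t)
    (hξlt : ∀ t ∈ Set.Ico (0:ℝ) δ, ξ t < 4 * A₀)
    (hineq : ∀ t ∈ Set.Ico (0:ℝ) δ,
      H' t * φ t ≤ - ∫ s in (0:ℝ)..t, H s * ξ s)
    (tm tp : ℝ) (htm : 0 ≤ tm) (hlt : tm < tp) (htp : tp < δ)
    (hHneg : H tm < 0)
    (hmin : ∀ t ∈ Set.Icc (0:ℝ) tp, H tm ≤ H t) :
    H tp ≤ H tm * (1 - 16 * δ ^ 2) := by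
  have hsub : Set.Icc tm tp ⊆ Set.Ico 0 δ := fun x hx =>
    ⟨le_trans htm hx.1, lt_of_le_of_lt hx.2 htp⟩
  have hHcont : ContinuousOn H (Set.Ico 0 δ) := fun t ht =>
    (hHdiff t ht).continuousWithinAt
  have hderiv : ∀ x ∈ Set.Ioo tm tp, HasDerivAt H (H' x) x := by
    intro x hx
    have hx' : x ∈ Set.Ioo 0 δ := ⟨lt_of_le_of_lt htm hx.1, hx.2.trans htp⟩
    exact (hHdiff x ⟨hx'.1.le, hx'.2⟩).hasDerivAt
      (Filter.mem_of_superset (isOpen_Ioo.mem_nhds hx') Set.Ioo_subset_Ico_self)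
  obtain ⟨c, hc, hslope⟩ := exists_hasDerivAt_eq_slope H H' hlt
    (hHcont.mono hsub) hderiv
  have hc0 : 0 ≤ c := htm.trans hc.1.le
  have hcmem : c ∈ Set.Ico 0 δ := ⟨hc0, hc.2.trans htp⟩
  have hint : IntervalIntegrable (fun s => H s * ξ s) MeasureTheory.volume 0 c := by
    apply ContinuousOn.intervalIntegrable
    apply (hHcont.mul hξcont).mono
    intro x hx
    rw [Set.uIcc_of_le hc0] at hx
    exact ⟨hx.1, lt_of_le_of_lt hx.2 hcmem.2⟩
  have hintge : H tm * (4 * A₀) * c ≤ ∫ s in (0:ℝ)..c, H s * ξ s := by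
    have hmono := intervalIntegral.integral_mono_on hc0
      (intervalIntegrable_const (c := H tm * (4 * A₀))) hint ?_
    · rw [intervalIntegral.integral_const] at hmono
      have : (c - 0) • (H tm * (4 * A₀)) = H tm * (4 * A₀) * c := by
        simp [smul_eq_mul]; ring
      linarith [hmono, this ▸ hmono]
    · intro s hs
      have hsδ : s ∈ Set.Ico (0:ℝ) δ := ⟨hs.1, lt_of_le_of_lt (hs.2.trans hc.2.le) htp⟩
      have h1 : H tm ≤ H s := hmin s ⟨hs.1, hs.2.trans hc.2.le⟩
      have h2 := hξpos s hsδ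
      have h3 := hξlt s hsδ
      nlinarith
  have hφc := hφ c hcmem
  have hHc := hineq c hcmem
  have hd : H' c ≤ -16 * H tm * c := by
    have hX : H' c * φ c ≤ -(H tm * (4 * A₀) * c) := le_trans hHc (by linarith)
    have hφpos : 0 < φ c := lt_trans (by linarith) hφc
    have hh : 0 ≤ (-H tm * c) * (φ c - A₀ / 4) :=
      mul_nonneg (mul_nonneg (by linarith) hc0) (by linarith)
    nlinarith [mul_pos hφpos hA₀]
  have htpm : H' c * (tp - tm) = H tp - H tm := by
    rw [hslope, div_mul_cancel₀ _ (sub_ne_zero.2 hlt.ne')]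
  have hcδ : c < δ := hcmem.2
  have htpmδ : tp - tm ≤ δ := by linarith
  have htpm0 : 0 < tp - tm := by linarith
  nlinarith [mul_le_mul_of_nonneg_right hd htpm0.le,
    mul_le_mul (le_of_lt hcδ) htpmδ htpm0.le hδ0.le,
    mul_nonneg (neg_nonneg.2 hHneg.le) (mul_nonneg hc0 htpm0.le)]
end

section
/- Let A₀ > 0 and 0 < δ < 1/4 be real numbers. Let H : ℝ → ℝ be differentiable on [0,δ) with H(0) = 0, and let φ, ξ : ℝ → ℝ be continuous on [0,δ) with φ(t) > A₀/4 and 0 < ξ(t) < 4·A₀ for all t ∈ [0,δ). Suppose H'(t)·φ(t) ≤ ∫₀ᵗ H(s)·ξ(s) ds for all t ∈ [0,δ). Then there is no t* ∈ (0,δ) such that H(t*) > 0 and H(s) ≤ H(t*) for all s ∈ [0,t*]. -/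
/-- The mean-value-theorem step in the proof of Claim 2 (Case 3 of Theorem 2):
there is no `t* ∈ (0,δ)` with `H(t*) > 0` which is a maximum of `H` on `[0,t*]`. -/
theorem stmt_4 (A₀ δ : ℝ) (hA₀ : 0 < A₀) (hδ0 : 0 < δ) (hδ : δ < 1/4)
    (H H' φ ξ : ℝ → ℝ)
    (hHdiff : ∀ t ∈ Set.Ico (0:ℝ) δ, HasDerivWithinAt H (H' t) (Set.Ico 0 δ) t)
    (hH0 : H 0 = 0)
    (hφcont : ContinuousOn φ (Set.Ico 0 δ))
    (hξcont : ContinuousOn ξ (Set.Ico 0 δ))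
    (hφ : ∀ t ∈ Set.Ico (0:ℝ) δ, A₀ / 4 < φ t)
    (hξpos : ∀ t ∈ Set.Ico (0:ℝ) δ, 0 < ξ t)
    (hξlt : ∀ t ∈ Set.Ico (0:ℝ) δ, ξ t < 4 * A₀)
    (hineq : ∀ t ∈ Set.Ico (0:ℝ) δ,
      H' t * φ t ≤ ∫ s in (0:ℝ)..t, H s * ξ s) :
    ¬ ∃ tstar ∈ Set.Ioo (0:ℝ) δ,
      0 < H tstar ∧ ∀ s ∈ Set.Icc (0:ℝ) tstar, H s ≤ H tstar := by
  rintro ⟨t, ⟨ht0, htδ⟩, hHt, hmax⟩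
  have hsub : Set.Icc (0:ℝ) t ⊆ Set.Ico 0 δ := fun x hx =>
    ⟨hx.1, lt_of_le_of_lt hx.2 htδ⟩
  have hHcont : ContinuousOn H (Set.Icc 0 t) := fun x hx =>
    ((hHdiff x (hsub hx)).continuousWithinAt).mono hsub
  -- MVT
  obtain ⟨c, hc, hceq⟩ := exists_hasDerivAt_eq_slope H H' ht0 hHcont
    (fun x hx => by
      have hx' : x ∈ Set.Ico (0:ℝ) δ := ⟨hx.1.le, hx.2.trans htδ⟩
      exact (hHdiff x hx').hasDerivAt
        (Filter.mem_of_superset (Ioo_mem_nhds hx.1 hx'.2)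
          Set.Ioo_subset_Ico_self))
  have hc' : c ∈ Set.Ico (0:ℝ) δ := ⟨hc.1.le, hc.2.trans htδ⟩
  have hHc : H' c = H t / t := by rw [hceq, hH0]; ring_nf
  have hH'pos : 0 < H' c := by
    rw [hHc]; exact div_pos hHt ht0
  -- integral bound
  have hcont : ContinuousOn (fun s => H s * ξ s) (Set.Icc 0 c) := by
    have hs : Set.Icc (0:ℝ) c ⊆ Set.Icc 0 t := Set.Icc_subset_Icc le_rfl hc.2.le
    exact ((hHcont.mono hs).mul (hξcont.mono (fun x hx => hsub (hs hx))))
  have huIcc : Set.uIcc (0:ℝ) c = Set.Icc 0 c := Set.uIcc_of_le hc.1.le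
  have hint : ∫ s in (0:ℝ)..c, H s * ξ s ≤ ∫ s in (0:ℝ)..c, 4 * A₀ * H t := by
    apply intervalIntegral.integral_mono_on hc.1.le
    · exact hcont.intervalIntegrable_of_Icc hc.1.le
    · exact intervalIntegrable_const
    · intro s hs
      have hsmem : s ∈ Set.Icc (0:ℝ) t := ⟨hs.1, hs.2.trans hc.2.le⟩
      have h1 : H s ≤ H t := hmax s hsmem
      have hsd := hsub hsmem
      have h2 : 0 < ξ s := hξpos s hsd
      have h3 : ξ s < 4 * A₀ := hξlt s hsd
      rcases le_or_gt (H s) 0 with h | h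
      · nlinarith
      · nlinarith
  rw [intervalIntegral.integral_const, smul_eq_mul, sub_zero] at hint
  have hkey := (hineq c hc').trans hint
  have hφc := hφ c hc'
  -- H' c * (A₀/4) < H' c * φ c ≤ c * (4A₀ * H t)
  have h1 : H' c * (A₀ / 4) < c * (4 * A₀ * H t) := by
    calc H' c * (A₀ / 4) < H' c * φ c := by
          exact mul_lt_mul_of_pos_left hφc hH'pos
      _ ≤ c * (4 * A₀ * H t) := hkey
  have hct : c < t := hc.2
  have ht14 : t < 1/4 := htδ.trans hδ
  have hHt' : H' c * t = H t := by
    rw [hHc]; field_simp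
  rw [← hHt'] at h1
  have h2 : c * t < 1/16 := by nlinarith
  have h3 : c * (4 * A₀ * (H' c * t)) < A₀ * H' c / 4 := by
    nlinarith [mul_pos hA₀ hH'pos]
  linarith
end

section
/- Let A₀ > 0 and 0 < δ < 1/4 be real numbers. Let H : ℝ → ℝ be differentiable on [0,δ) with H(0) = 0, and let φ, ξ : ℝ → ℝ be continuous on [0,δ) with φ(t) > A₀/4 and 0 < ξ(t) < 4·A₀ for all t ∈ [0,δ). Define A(t) := A₀ + ∫₀ᵗ H(s)·ξ(s) ds. Suppose H'(t)·φ(t) ≤ −∫₀ᵗ H(s)·ξ(s) ds for all t ∈ [0,δ). If there exists t₊ ∈ (0,δ) with H(t₊) > 0, then there exists t₋ ∈ [0,t₊) with H(t₋) < 0; equivalently, the minimum of H over [0,t₊] is strictly negative. -/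
/-- The intermediate observation in Case 1 of Claim 1 of Theorem 2:
if `H(tp) > 0` for some `tp ∈ (0,δ)`, then `H` is strictly negative somewhere
in `[0,tp)`; equivalently, the minimum of `H` on `[0,tp]` is strictly negative. -/
theorem stmt_5 (A₀ δ : ℝ) (hA₀ : 0 < A₀) (hδ0 : 0 < δ) (hδ : δ < 1/4)
    (H H' φ ξ : ℝ → ℝ)
    (hHdiff : ∀ t ∈ Set.Ico (0:ℝ) δ, HasDerivWithinAt H (H' t) (Set.Ico 0 δ) t)
    (hH0 : H 0 = 0)
    (hφcont : ContinuousOn φ (Set.Ico 0 δ))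
    (hξcont : ContinuousOn ξ (Set.Ico 0 δ))
    (hφ : ∀ t ∈ Set.Ico (0:ℝ) δ, A₀ / 4 < φ t)
    (hξpos : ∀ t ∈ Set.Ico (0:ℝ) δ, 0 < ξ t)
    (hξlt : ∀ t ∈ Set.Ico (0:ℝ) δ, ξ t < 4 * A₀)
    (A : ℝ → ℝ) (hA : ∀ t, A t = A₀ + ∫ s in (0:ℝ)..t, H s * ξ s)
    (hineq : ∀ t ∈ Set.Ico (0:ℝ) δ,
      H' t * φ t ≤ - ∫ s in (0:ℝ)..t, H s * ξ s)
    (tp : ℝ) (htp : tp ∈ Set.Ioo (0:ℝ) δ) (hHpos : 0 < H tp) :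
    ∃ tm ∈ Set.Ico (0:ℝ) tp, H tm < 0 := by
  by_contra hcon
  push_neg at hcon
  have hHnn : ∀ s ∈ Set.Icc (0:ℝ) tp, 0 ≤ H s := by
    intro s hs
    rcases eq_or_lt_of_le hs.2 with h | h
    · rw [h]; exact hHpos.le
    · exact hcon s ⟨hs.1, h⟩
  have hsub : Set.Icc (0:ℝ) tp ⊆ Set.Ico 0 δ := fun x hx => ⟨hx.1, lt_of_le_of_lt hx.2 htp.2⟩
  -- integral nonneg for t ∈ Icc 0 tp
  have hint : ∀ t ∈ Set.Icc (0:ℝ) tp, 0 ≤ ∫ s in (0:ℝ)..t, H s * ξ s := by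
    intro t ht
    apply intervalIntegral.integral_nonneg ht.1
    intro u hu
    have hu' : u ∈ Set.Icc (0:ℝ) tp := ⟨hu.1, hu.2.trans ht.2⟩
    exact mul_nonneg (hHnn u hu') (hξpos u (hsub hu')).le
  -- H' ≤ 0 on Icc 0 tp
  have hH'np : ∀ t ∈ Set.Icc (0:ℝ) tp, H' t ≤ 0 := by
    intro t ht
    have h1 := hineq t (hsub ht)
    have h2 := hint t ht
    have hφpos : 0 < φ t := lt_trans (by linarith) (hφ t (hsub ht))
    nlinarith
  -- H antitone on Icc 0 tp
  have hcontH : ContinuousOn H (Set.Icc 0 tp) := fun x hx =>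
    ((hHdiff x (hsub hx)).continuousWithinAt).mono hsub
  have hdAt : ∀ x ∈ Set.Ioo (0:ℝ) tp, HasDerivAt H (H' x) x := by
    intro x hx
    have hx' : x ∈ Set.Ico (0:ℝ) δ := ⟨hx.1.le, hx.2.trans htp.2⟩
    have hnhds : Set.Ico (0:ℝ) δ ∈ nhds x :=
      Filter.mem_of_superset (Ioo_mem_nhds hx.1 hx'.2) Set.Ioo_subset_Ico_self
    exact (hHdiff x hx').hasDerivAt hnhds
  have hanti : AntitoneOn H (Set.Icc 0 tp) := by
    apply antitoneOn_of_deriv_nonpos (convex_Icc 0 tp) hcontH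
    · intro x hx
      rw [interior_Icc] at hx
      exact (hdAt x hx).differentiableAt.differentiableWithinAt
    intro x hx
    rw [interior_Icc] at hx
    rw [(hdAt x hx).deriv]
    exact hH'np x ⟨hx.1.le, hx.2.le⟩
  have := hanti (Set.left_mem_Icc.mpr htp.1.le) (Set.right_mem_Icc.mpr htp.1.le) htp.1.le
  rw [hH0] at this
  linarith
end

section
/- Let A₀ > 0 and 0 < δ < 1/4 be real numbers. Let H : ℝ → ℝ be differentiable on (−δ,δ) with H(0) = 0, and let φ, ξ : ℝ → ℝ be continuous on (−δ,δ) with φ(t) > A₀/4 and 0 < ξ(t) < 4·A₀ for all t ∈ (−δ,δ). Define A(t) := A₀ + ∫₀ᵗ H(s)·ξ(s) ds. If H'(t)·φ(t) ≤ −∫₀ᵗ H(s)·ξ(s) ds for all t ∈ (−δ,δ), then H(t) ≤ 0 for all t ∈ [0,δ), H(t) ≥ 0 for all t ∈ (−δ,0], and consequently A(t) ≤ A₀ for all t ∈ (−δ,δ). -/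
lemma key_onesided (A₀ δ : ℝ) (hA₀ : 0 < A₀) (hδ0 : 0 < δ) (hδ : δ < 1/4)
    (H H' φ ξ : ℝ → ℝ)
    (hHdiff : ∀ t ∈ Set.Ioo (-δ) δ, HasDerivAt H (H' t) t)
    (hH0 : H 0 = 0)
    (hξcont : ContinuousOn ξ (Set.Ioo (-δ) δ))
    (hφ : ∀ t ∈ Set.Ioo (-δ) δ, A₀ / 4 < φ t)
    (hξpos : ∀ t ∈ Set.Ioo (-δ) δ, 0 < ξ t)
    (hξlt : ∀ t ∈ Set.Ioo (-δ) δ, ξ t < 4 * A₀)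
    (hineq : ∀ t ∈ Set.Ioo (-δ) δ,
      H' t * φ t ≤ - ∫ s in (0:ℝ)..t, H s * ξ s) :
    ∀ t ∈ Set.Ico (0:ℝ) δ, H t ≤ 0 := by
  rintro t₁ ⟨ht₁0, ht₁δ⟩
  have hsub : Set.Icc (0:ℝ) t₁ ⊆ Set.Ioo (-δ) δ := by
    intro u hu
    exact ⟨by linarith [hu.1], by linarith [hu.2]⟩
  have hHcont : ContinuousOn H (Set.Icc (0:ℝ) t₁) := fun u hu =>
    ((hHdiff u (hsub hu)).continuousAt).continuousWithinAt
  obtain ⟨s₀, hs₀mem, hs₀max⟩ :=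
    isCompact_Icc.exists_isMaxOn (Set.nonempty_Icc.mpr ht₁0) hHcont.neg
  obtain ⟨m, hm⟩ : ∃ m : ℝ, m = -H s₀ := ⟨_, rfl⟩
  have hmax : ∀ u ∈ Set.Icc (0:ℝ) t₁, -m ≤ H u := by
    intro u hu
    have := hs₀max hu
    simp only [Set.mem_setOf_eq, Pi.neg_apply] at this
    simp only [hm]
    linarith
  have hm0 : 0 ≤ m := by
    have := hs₀max (Set.left_mem_Icc.mpr ht₁0)
    simp only [Set.mem_setOf_eq, hH0, Pi.neg_apply] at this
    simp only [hm]
    linarith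
  -- derivative bound on Icc 0 t₁
  have hder : ∀ s ∈ Set.Icc (0:ℝ) t₁, H' s ≤ 16 * m * δ := by
    intro s hs
    have hsδ : s ∈ Set.Ioo (-δ) δ := hsub hs
    have hIccsub : Set.Icc (0:ℝ) s ⊆ Set.Icc (0:ℝ) t₁ := by
      intro u hu; exact ⟨hu.1, le_trans hu.2 hs.2⟩
    have hInt : IntervalIntegrable (fun u => H u * ξ u) MeasureTheory.volume 0 s := by
      apply ContinuousOn.intervalIntegrable
      rw [Set.uIcc_of_le hs.1]
      exact (hHcont.mono hIccsub).mul
        (hξcont.mono (fun u hu => hsub (hIccsub hu)))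
    have hIntc : IntervalIntegrable (fun _ : ℝ => -(4 * A₀ * m)) MeasureTheory.volume 0 s :=
      intervalIntegrable_const
    have hlb : -(4 * A₀ * m) * s ≤ ∫ u in (0:ℝ)..s, H u * ξ u := by
      have h := intervalIntegral.integral_mono_on hs.1 hIntc hInt ?_
      · rw [intervalIntegral.integral_const, smul_eq_mul, sub_zero] at h
        linarith
      · intro u hu
        have hu' := hIccsub hu
        have h1 := hmax u hu'
        have h2 := hξpos u (hsub hu')
        have h3 := hξlt u (hsub hu')
        rcases le_or_gt 0 (H u) with h | h
        · nlinarith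
        · nlinarith
    have hφs := hφ s hsδ
    have hφpos : 0 < φ s := lt_trans (by linarith) hφs
    have h1 := hineq s hsδ
    have h2 : H' s * φ s ≤ (16 * m * δ) * φ s := by
      have hsδ' : s ≤ δ := le_of_lt hsδ.2
      have hs0 : 0 ≤ s := hs.1
      have hn1 : (0:ℝ) ≤ 4 * A₀ * m := by positivity
      have hn2 : (0:ℝ) ≤ 16 * m * δ :=
        mul_nonneg (mul_nonneg (by norm_num) hm0) hδ0.le
      have hb1 : H' s * φ s ≤ 4 * A₀ * m * s := by linarith
      have hb2 : 4 * A₀ * m * s ≤ 4 * A₀ * m * δ :=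
        mul_le_mul_of_nonneg_left hsδ' hn1
      have hb3 : 16 * m * δ * (A₀ / 4) ≤ 16 * m * δ * φ s :=
        mul_le_mul_of_nonneg_left hφs.le hn2
      linarith
    exact le_of_mul_le_mul_right h2 hφpos
  -- antitone comparison
  have hs₀t₁ : s₀ ≤ t₁ := hs₀mem.2
  have hanti : AntitoneOn (fun s => H s - 16 * m * δ * s) (Set.Icc s₀ t₁) := by
    apply antitoneOn_of_deriv_nonpos (convex_Icc _ _)
    · exact (hHcont.mono (fun u hu => ⟨le_trans hs₀mem.1 hu.1, hu.2⟩)).sub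
        (continuous_const.mul continuous_id).continuousOn
    · intro x hx
      rw [interior_Icc] at hx
      have hxδ : x ∈ Set.Ioo (-δ) δ :=
        hsub ⟨le_trans hs₀mem.1 hx.1.le, hx.2.le⟩
      exact (((hHdiff x hxδ).sub
        ((hasDerivAt_id x).const_mul (16 * m * δ))).differentiableAt).differentiableWithinAt
    · intro x hx
      rw [interior_Icc] at hx
      have hxδ : x ∈ Set.Ioo (-δ) δ :=
        hsub ⟨le_trans hs₀mem.1 hx.1.le, hx.2.le⟩
      have hD : HasDerivAt (fun s => H s - 16 * m * δ * s) (H' x - 16 * m * δ) x := by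
        exact ((hHdiff x hxδ).sub ((hasDerivAt_id x).const_mul (16 * m * δ))).congr_deriv (by ring)
      rw [hD.deriv]
      have := hder x ⟨le_trans hs₀mem.1 hx.1.le, hx.2.le⟩
      linarith
  have hfin := hanti (Set.left_mem_Icc.mpr hs₀t₁) (Set.right_mem_Icc.mpr hs₀t₁) hs₀t₁
  simp only at hfin
  -- H t₁ - 16mδ t₁ ≤ H s₀ - 16mδ s₀ = -m - 16mδ s₀
  have hs₀0 : 0 ≤ s₀ := hs₀mem.1
  have key1 : 16 * m * δ * t₁ ≤ m := by
    have ha : δ * t₁ ≤ δ * δ := mul_le_mul_of_nonneg_left (le_of_lt ht₁δ) hδ0.le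
    have hb : δ * δ < (1/4) * (1/4) := by nlinarith
    have hc : m * (δ * t₁) ≤ m * (1/16) :=
      mul_le_mul_of_nonneg_left (by linarith) hm0
    nlinarith
  have hnn : (0:ℝ) ≤ 16 * m * δ * s₀ := by
    have := mul_nonneg (mul_nonneg (mul_nonneg (by norm_num : (0:ℝ) ≤ 16) hm0) hδ0.le) hs₀0
    linarith
  linarith [hfin, key1, hnn, hm]


/-- The full two-sided analytic content of Theorem 2 in the case `R₀ > 0`:
the integro-differential inequality `H'(t)·φ(t) ≤ −∫₀ᵗ H(s)·ξ(s) ds` on `(−δ,δ)`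
forces `H ≤ 0` on `[0,δ)`, `H ≥ 0` on `(−δ,0]`, and hence the area
`A(t) = A₀ + ∫₀ᵗ H(s)·ξ(s) ds` satisfies `A(t) ≤ A₀` on `(−δ,δ)`. -/
theorem stmt_6 (A₀ δ : ℝ) (hA₀ : 0 < A₀) (hδ0 : 0 < δ) (hδ : δ < 1/4)
    (H H' φ ξ : ℝ → ℝ)
    (hHdiff : ∀ t ∈ Set.Ioo (-δ) δ, HasDerivAt H (H' t) t)
    (hH0 : H 0 = 0)
    (hφcont : ContinuousOn φ (Set.Ioo (-δ) δ))
    (hξcont : ContinuousOn ξ (Set.Ioo (-δ) δ))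
    (hφ : ∀ t ∈ Set.Ioo (-δ) δ, A₀ / 4 < φ t)
    (hξpos : ∀ t ∈ Set.Ioo (-δ) δ, 0 < ξ t)
    (hξlt : ∀ t ∈ Set.Ioo (-δ) δ, ξ t < 4 * A₀)
    (A : ℝ → ℝ) (hA : ∀ t, A t = A₀ + ∫ s in (0:ℝ)..t, H s * ξ s)
    (hineq : ∀ t ∈ Set.Ioo (-δ) δ,
      H' t * φ t ≤ - ∫ s in (0:ℝ)..t, H s * ξ s) :
    (∀ t ∈ Set.Ico (0:ℝ) δ, H t ≤ 0) ∧
    (∀ t ∈ Set.Ioc (-δ) (0:ℝ), 0 ≤ H t) ∧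
    (∀ t ∈ Set.Ioo (-δ) δ, A t ≤ A₀) := by
  have hpos := key_onesided A₀ δ hA₀ hδ0 hδ H H' φ ξ hHdiff hH0 hξcont hφ hξpos hξlt hineq
  have hmemneg : ∀ t ∈ Set.Ioo (-δ) δ, -t ∈ Set.Ioo (-δ) δ := by
    rintro t ⟨h1, h2⟩; exact ⟨by linarith, by linarith⟩
  -- the reflected integral identity
  have hint : ∀ t : ℝ, (∫ s in (0:ℝ)..t, (-H (-s)) * ξ (-s))
      = ∫ s in (0:ℝ)..(-t), H s * ξ s := by
    intro t
    have h1 : (∫ s in (0:ℝ)..t, (fun u => H u * ξ u) (-s))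
        = ∫ s in (-t)..(0:ℝ), H s * ξ s := by
      simpa using intervalIntegral.integral_comp_neg (a := (0:ℝ)) (b := t)
        (fun u => H u * ξ u)
    have h2 : (∫ s in (0:ℝ)..t, (-H (-s)) * ξ (-s))
        = -∫ s in (0:ℝ)..t, (fun u => H u * ξ u) (-s) := by
      rw [← intervalIntegral.integral_neg]
      congr 1; funext s; ring
    rw [h2, h1, ← intervalIntegral.integral_symm]
  have hneg' := key_onesided A₀ δ hA₀ hδ0 hδ (fun t => -H (-t)) (fun t => H' (-t))
    (fun t => φ (-t)) (fun t => ξ (-t))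
    (by
      intro t ht
      have h := (hHdiff (-t) (hmemneg t ht)).comp t (hasDerivAt_neg t)
      have h2 := h.neg
      exact h2.congr_deriv (by ring))
    (by simp [hH0])
    (by
      intro u hu
      exact (hξcont.comp continuous_neg.continuousOn
        (fun x hx => hmemneg x hx)) u hu)
    (fun t ht => hφ (-t) (hmemneg t ht))
    (fun t ht => hξpos (-t) (hmemneg t ht))
    (fun t ht => hξlt (-t) (hmemneg t ht))
    (by
      intro t ht
      rw [hint t]
      exact hineq (-t) (hmemneg t ht))
  have hneg : ∀ t ∈ Set.Ioc (-δ) (0:ℝ), 0 ≤ H t := by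
    rintro t ⟨h1, h2⟩
    have := hneg' (-t) ⟨by linarith, by linarith⟩
    simpa using this
  refine ⟨hpos, hneg, ?_⟩
  rintro t ⟨h1, h2⟩
  rw [hA t]
  have hIle : (∫ s in (0:ℝ)..t, H s * ξ s) ≤ 0 := by
    rcases le_or_gt 0 t with ht | ht
    · have hnn : (0:ℝ) ≤ ∫ s in (0:ℝ)..t, -(H s * ξ s) := by
        apply intervalIntegral.integral_nonneg ht
        intro u hu
        have hu1 : H u ≤ 0 := hpos u ⟨hu.1, lt_of_le_of_lt hu.2 h2⟩
        have hu2 : 0 < ξ u := hξpos u ⟨by linarith [hu.1], lt_of_le_of_lt hu.2 h2⟩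
        have := mul_nonpos_of_nonpos_of_nonneg hu1 hu2.le
        linarith
      rw [intervalIntegral.integral_neg] at hnn
      linarith
    · have hsymm : (∫ s in (0:ℝ)..t, H s * ξ s)
          = -∫ s in t..(0:ℝ), H s * ξ s :=
        intervalIntegral.integral_symm t 0
      rw [hsymm]
      have : (0:ℝ) ≤ ∫ s in t..(0:ℝ), H s * ξ s := by
        apply intervalIntegral.integral_nonneg ht.le
        intro u hu
        have hu1 : 0 ≤ H u := hneg u ⟨lt_of_lt_of_le h1 hu.1, hu.2⟩
        have hu2 : 0 < ξ u := hξpos u ⟨lt_of_lt_of_le h1 hu.1, by linarith [hu.2]⟩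
        exact mul_nonneg hu1 hu2.le
      linarith
  linarith
end

section
/- Let A₀ > 0 and 0 < δ < 1/4 be real numbers. Let H : ℝ → ℝ be differentiable on (−δ,δ) with H(0) = 0, and let φ, ξ : ℝ → ℝ be continuous on (−δ,δ) with φ(t) > A₀/4 and 0 < ξ(t) < 4·A₀ for all t ∈ (−δ,δ). Define A(t) := A₀ + ∫₀ᵗ H(s)·ξ(s) ds. If H'(t)·φ(t) ≤ ∫₀ᵗ H(s)·ξ(s) ds for all t ∈ (−δ,δ), then H(t) ≤ 0 for all t ∈ [0,δ), H(t) ≥ 0 for all t ∈ (−δ,0], and consequently A(t) ≤ A₀ for all t ∈ (−δ,δ). -/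
open Set intervalIntegral

private lemma key_half (A₀ δ : ℝ) (hA₀ : 0 < A₀) (hδ : δ < 1/4)
    (H H' φ ξ : ℝ → ℝ)
    (hHdiff : ∀ t ∈ Set.Ioo (-δ) δ, HasDerivAt H (H' t) t)
    (hH0 : H 0 = 0)
    (hξcont : ContinuousOn ξ (Set.Ioo (-δ) δ))
    (hφ : ∀ t ∈ Set.Ioo (-δ) δ, A₀ / 4 < φ t)
    (hξpos : ∀ t ∈ Set.Ioo (-δ) δ, 0 < ξ t)
    (hξlt : ∀ t ∈ Set.Ioo (-δ) δ, ξ t < 4 * A₀)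
    (hineq : ∀ t ∈ Set.Ioo (-δ) δ,
      H' t * φ t ≤ ∫ s in (0:ℝ)..t, H s * ξ s) :
    ∀ t ∈ Set.Ico (0:ℝ) δ, H t ≤ 0 := by
  intro b hb
  obtain ⟨hb0, hbδ⟩ := hb
  have hδ0 : 0 < δ := lt_of_le_of_lt hb0 hbδ
  have hsub : Set.Icc (0:ℝ) b ⊆ Set.Ioo (-δ) δ := fun x hx =>
    ⟨by linarith [hx.1], lt_of_le_of_lt hx.2 hbδ⟩
  have hHcont : ContinuousOn H (Set.Ioo (-δ) δ) := fun x hx =>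
    ((hHdiff x hx).continuousAt).continuousWithinAt
  have hHc : ContinuousOn H (Set.Icc (0:ℝ) b) := hHcont.mono hsub
  -- max of H on [0,b]
  obtain ⟨c, hc, hcmax⟩ := (isCompact_Icc).exists_isMaxOn
    (Set.nonempty_Icc.2 hb0) hHc
  set M : ℝ := H c with hM
  have hM0 : 0 ≤ M := by
    have := hcmax ⟨le_refl 0, hb0⟩
    simpa [hH0] using this
  have hfint : ContinuousOn (fun s => H s * ξ s) (Set.Ioo (-δ) δ) :=
    hHcont.mul hξcont
  -- derivative bound
  have hderiv : ∀ s ∈ Set.Icc (0:ℝ) b, H' s ≤ 4 * M := by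
    intro s hs
    have hsmem : s ∈ Set.Ioo (-δ) δ := hsub hs
    have hFs : (∫ u in (0:ℝ)..s, H u * ξ u) ≤ M * A₀ := by
      have hsub' : Set.Icc (0:ℝ) s ⊆ Set.Ioo (-δ) δ := fun x hx =>
        hsub ⟨hx.1, le_trans hx.2 hs.2⟩
      have h1 : IntervalIntegrable (fun u => H u * ξ u) MeasureTheory.volume 0 s := by
        apply ContinuousOn.intervalIntegrable
        rw [Set.uIcc_of_le hs.1]
        exact hfint.mono hsub'
      have h2 : (∫ u in (0:ℝ)..s, H u * ξ u) ≤ ∫ _u in (0:ℝ)..s, 4 * M * A₀ := by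
        apply intervalIntegral.integral_mono_on hs.1 h1 intervalIntegrable_const
        intro u hu
        have hum : u ∈ Set.Ioo (-δ) δ := hsub' hu
        have h3 : H u ≤ M := hcmax ⟨hu.1, le_trans hu.2 hs.2⟩
        have h4 : 0 < ξ u := hξpos u hum
        have h5 : ξ u < 4 * A₀ := hξlt u hum
        nlinarith
      rw [intervalIntegral.integral_const, smul_eq_mul] at h2
      have hsδ : s < 1/4 := lt_trans (lt_of_le_of_lt hs.2 hbδ) hδ
      nlinarith [hs.1, mul_nonneg hM0 hA₀.le]
    have hHs := hineq s hsmem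
    have hφs := hφ s hsmem
    -- H' s * φ s ≤ M * A₀, φ s > A₀/4 > 0
    by_contra hcon
    push_neg at hcon
    have hH'pos : 0 < H' s := lt_of_le_of_lt (by nlinarith) hcon
    nlinarith
  -- G t = 4M t - H t monotone on [0,b]
  have hmono : MonotoneOn (fun t => 4 * M * t - H t) (Set.Icc (0:ℝ) b) := by
    apply monotoneOn_of_hasDerivWithinAt_nonneg (convex_Icc 0 b)
      (f' := fun t => 4 * M - H' t)
    · exact (continuousOn_const.mul continuousOn_id).sub hHc
    · intro x hx
      have hx' : x ∈ Set.Icc (0:ℝ) b := interior_subset hx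
      have := (((hasDerivAt_id x).const_mul (4*M)).sub (hHdiff x (hsub hx'))).hasDerivWithinAt
        (s := interior (Set.Icc (0:ℝ) b))
      rw [mul_one] at this
      exact this
    · intro x hx
      have hx' : x ∈ Set.Icc (0:ℝ) b := interior_subset hx
      linarith [hderiv x hx']
  -- conclude M ≤ 0
  have hMle : M ≤ 4 * M * c := by
    have := hmono ⟨le_refl 0, hb0⟩ hc hc.1
    simp only [hH0, mul_zero, sub_zero] at this
    linarith
  have hc14 : c < 1/4 := lt_trans (lt_of_le_of_lt hc.2 hbδ) hδ
  have hMneg : M ≤ 0 := by nlinarith [hc.1]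
  exact le_trans (hcmax ⟨hb0, le_refl b⟩) hMneg

/-- The full two-sided analytic content of Theorem 2 in the case `R₀ < 0`:
the integro-differential inequality `H'(t)·φ(t) ≤ ∫₀ᵗ H(s)·ξ(s) ds` on `(−δ,δ)`
forces `H ≤ 0` on `[0,δ)`, `H ≥ 0` on `(−δ,0]`, and hence the area
`A(t) = A₀ + ∫₀ᵗ H(s)·ξ(s) ds` satisfies `A(t) ≤ A₀` on `(−δ,δ)`. -/
theorem stmt_7 (A₀ δ : ℝ) (hA₀ : 0 < A₀) (hδ0 : 0 < δ) (hδ : δ < 1/4)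
    (H H' φ ξ : ℝ → ℝ)
    (hHdiff : ∀ t ∈ Set.Ioo (-δ) δ, HasDerivAt H (H' t) t)
    (hH0 : H 0 = 0)
    (hφcont : ContinuousOn φ (Set.Ioo (-δ) δ))
    (hξcont : ContinuousOn ξ (Set.Ioo (-δ) δ))
    (hφ : ∀ t ∈ Set.Ioo (-δ) δ, A₀ / 4 < φ t)
    (hξpos : ∀ t ∈ Set.Ioo (-δ) δ, 0 < ξ t)
    (hξlt : ∀ t ∈ Set.Ioo (-δ) δ, ξ t < 4 * A₀)
    (A : ℝ → ℝ) (hA : ∀ t, A t = A₀ + ∫ s in (0:ℝ)..t, H s * ξ s)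
    (hineq : ∀ t ∈ Set.Ioo (-δ) δ,
      H' t * φ t ≤ ∫ s in (0:ℝ)..t, H s * ξ s) :
    (∀ t ∈ Set.Ico (0:ℝ) δ, H t ≤ 0) ∧
    (∀ t ∈ Set.Ioc (-δ) (0:ℝ), 0 ≤ H t) ∧
    (∀ t ∈ Set.Ioo (-δ) δ, A t ≤ A₀) := by
  have hright : ∀ t ∈ Set.Ico (0:ℝ) δ, H t ≤ 0 :=
    key_half A₀ δ hA₀ hδ H H' φ ξ hHdiff hH0 hξcont hφ hξpos hξlt hineq
  -- reflected system
  have hnegmem : ∀ t ∈ Set.Ioo (-δ) δ, -t ∈ Set.Ioo (-δ) δ := by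
    intro t ht; exact ⟨by linarith [ht.2], by linarith [ht.1]⟩
  have hFneg : ∀ t : ℝ, (∫ s in (0:ℝ)..t, (-H (-s)) * ξ (-s))
      = ∫ s in (0:ℝ)..(-t), H s * ξ s := by
    intro t
    have h1 : (∫ s in (0:ℝ)..t, (fun u => H u * ξ u) (-s))
        = ∫ s in (-t)..(0:ℝ), H s * ξ s := by
      simpa using intervalIntegral.integral_comp_neg (a := (0:ℝ)) (b := t)
        (f := fun u => H u * ξ u)
    calc (∫ s in (0:ℝ)..t, (-H (-s)) * ξ (-s))
        = -∫ s in (0:ℝ)..t, (fun u => H u * ξ u) (-s) := by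
          rw [← intervalIntegral.integral_neg]; congr 1; ext s; ring
      _ = -∫ s in (-t)..(0:ℝ), H s * ξ s := by rw [h1]
      _ = ∫ s in (0:ℝ)..(-t), H s * ξ s := by
          rw [integral_symm, neg_neg]
  have hleft : ∀ t ∈ Set.Ico (0:ℝ) δ, -H (-t) ≤ 0 := by
    apply key_half A₀ δ hA₀ hδ (fun t => -H (-t)) (fun t => H' (-t))
      (fun t => φ (-t)) (fun t => ξ (-t))
    · intro t ht
      have h := hHdiff (-t) (hnegmem t ht)
      have := (h.comp t (hasDerivAt_neg t)).neg
      rw [show -(H' (-t) * -1) = H' (-t) by ring] at this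
      exact this
    · simpa using hH0
    · exact hξcont.comp continuous_neg.continuousOn fun t ht => hnegmem t ht
    · intro t ht; exact hφ (-t) (hnegmem t ht)
    · intro t ht; exact hξpos (-t) (hnegmem t ht)
    · intro t ht; exact hξlt (-t) (hnegmem t ht)
    · intro t ht
      rw [hFneg t]
      exact hineq (-t) (hnegmem t ht)
  have hleft' : ∀ t ∈ Set.Ioc (-δ) (0:ℝ), 0 ≤ H t := by
    intro t ht
    have h := hleft (-t) ⟨by linarith [ht.2], by linarith [ht.1]⟩
    simpa using h
  refine ⟨hright, hleft', ?_⟩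
  intro t ht
  rw [hA t]
  have hHcont : ContinuousOn H (Set.Ioo (-δ) δ) := fun x hx =>
    ((hHdiff x hx).continuousAt).continuousWithinAt
  have hfint : ContinuousOn (fun s => H s * ξ s) (Set.Ioo (-δ) δ) :=
    hHcont.mul hξcont
  have hFle : (∫ s in (0:ℝ)..t, H s * ξ s) ≤ 0 := by
    rcases le_or_gt 0 t with h0t | ht0
    · have hsub' : Set.uIcc (0:ℝ) t ⊆ Set.Ioo (-δ) δ := by
        rw [Set.uIcc_of_le h0t]
        exact fun x hx => ⟨by linarith [hx.1], lt_of_le_of_lt hx.2 ht.2⟩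
      rw [← neg_nonneg, ← integral_neg]
      apply integral_nonneg h0t
      intro u hu
      have hum : u ∈ Set.Ioo (-δ) δ := hsub' (Set.uIcc_of_le h0t ▸ hu)
      have h1 : H u ≤ 0 := hright u ⟨hu.1, hum.2⟩
      have h2 : 0 < ξ u := hξpos u hum
      nlinarith
    · rw [integral_symm, neg_nonpos]
      have hsub' : Set.uIcc t (0:ℝ) ⊆ Set.Ioo (-δ) δ := by
        rw [Set.uIcc_of_le ht0.le]
        exact fun x hx => ⟨lt_of_lt_of_le ht.1 hx.1, by linarith [hx.2]⟩
      apply integral_nonneg ht0.le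
      intro u hu
      have hum : u ∈ Set.Ioo (-δ) δ := hsub' (Set.uIcc_of_le ht0.le ▸ hu)
      have h1 : 0 ≤ H u := hleft' u ⟨hum.1, hu.2⟩
      have h2 : 0 < ξ u := hξpos u hum
      nlinarith
  linarith
end
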